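/- The Gaussian mechanism is (ε, δ)-differentially private in one dimension: for f : D → ℝ with sensitivity Δ, releasing f(D) + N(0, σ²) with σ = Δ·√(2 ln(1.25/δ))/ε satisfies (ε, δ)-DP, for ε ∈ (0,1). -/

import Mathlib

open MeasureTheory ProbabilityTheory
open scoped NNReal ENNReal

section GaussianDPHelpers

open Set
open scoped Real

lemma gauss_map_neg (v : ℝ≥0) : (gaussianReal 0 v).map (fun x : ℝ => -x) = gaussianReal 0 v := by
  have h := gaussianReal_map_const_mul (μ := 0) (v := v) (-1)
  have h2 : (⟨(-1:ℝ)^2, sq_nonneg _⟩ : ℝ≥0) = 1 := by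
    apply Subtype.ext; norm_num
  simp only [neg_one_mul, h2, one_mul, mul_zero, neg_zero] at h
  convert h using 2; ext; simp

lemma gauss_Iio_eq_Ioi (v : ℝ≥0) (t : ℝ) :
    gaussianReal 0 v (Iio t) = gaussianReal 0 v (Ioi (-t)) := by
  conv_lhs => rw [← gauss_map_neg v]
  rw [Measure.map_apply measurable_neg measurableSet_Iio]
  congr 1
  ext x
  simp [neg_lt]

lemma gauss_half (v : ℝ≥0) :
    gaussianReal 0 v (Ioi (0:ℝ)) ≤ ENNReal.ofReal (1/2) := by
  have hsym : gaussianReal 0 v (Iio (0:ℝ)) = gaussianReal 0 v (Ioi (0:ℝ)) := by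
    rw [gauss_Iio_eq_Ioi]; norm_num
  have hdisj : Disjoint (Ioi (0:ℝ)) (Iio 0) := by
    rw [Set.disjoint_left]; intro x hx hx'; exact absurd (mem_Iio.mp hx') (not_lt.mpr (le_of_lt (mem_Ioi.mp hx)))
  have hsum : gaussianReal 0 v (Ioi (0:ℝ)) + gaussianReal 0 v (Iio 0) ≤ 1 := by
    rw [← measure_union hdisj measurableSet_Iio]
    exact (measure_mono (subset_univ _)).trans (le_of_eq measure_univ)
  rw [hsym] at hsum
  have hhalf : ENNReal.ofReal (1/2) = 2⁻¹ := by
    rw [one_div, ENNReal.ofReal_inv_of_pos (by norm_num)]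
    norm_num
  rw [hhalf]
  by_contra h
  push_neg at h
  have := ENNReal.add_lt_add h h
  rw [ENNReal.inv_two_add_inv_two] at this
  exact absurd hsum (not_le.mpr this)

lemma gauss_shift (m : ℝ) (v : ℝ≥0) {s : Set ℝ} (hs : MeasurableSet s) :
    gaussianReal m v s = gaussianReal 0 v ((· + m) ⁻¹' s) := by
  have h := gaussianReal_map_add_const (μ := 0) (v := v) m
  rw [zero_add] at h
  rw [← h, Measure.map_apply (measurable_add_const m) hs]

lemma tail_pos (σ : ℝ) (hσ : 0 < σ) (a : ℝ) (ha : 0 ≤ a) :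
    gaussianReal 0 ((σ^2).toNNReal) (Ioi a)
      ≤ ENNReal.ofReal (Real.exp (-(a^2) / (2*σ^2)) * (1/2)) := by
  set v : ℝ≥0 := (σ^2).toNNReal with hvdef
  have hv : v ≠ 0 := by
    rw [hvdef]
    exact (Real.toNNReal_pos.mpr (by positivity)).ne'
  have hvr : ((v : ℝ≥0) : ℝ) = σ^2 := Real.coe_toNNReal _ (sq_nonneg σ)
  set C : ℝ := Real.exp (-(a^2) / (2*σ^2)) with hC
  have hCnn : 0 ≤ C := (Real.exp_pos _).le
  have key : ∀ x ∈ Ioi a, gaussianPDF 0 v x ≤ ENNReal.ofReal C * gaussianPDF a v x := by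
    intro x hx
    rw [mem_Ioi] at hx
    rw [gaussianPDF, gaussianPDF, ← ENNReal.ofReal_mul hCnn]
    apply ENNReal.ofReal_le_ofReal
    rw [gaussianPDFReal, gaussianPDFReal, hvr]
    rw [mul_left_comm]
    apply mul_le_mul_of_nonneg_left _ (by positivity)
    rw [hC, ← Real.exp_add]
    apply Real.exp_le_exp.mpr
    have h2σ : (0:ℝ) < 2*σ^2 := by positivity
    rw [← add_div, div_le_div_iff₀ h2σ h2σ]
    have hax : 0 ≤ a * (x - a) := mul_nonneg ha (by linarith)
    nlinarith
  calc gaussianReal 0 v (Ioi a) = ∫⁻ x in Ioi a, gaussianPDF 0 v x :=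
        gaussianReal_apply 0 hv _
    _ ≤ ∫⁻ x in Ioi a, ENNReal.ofReal C * gaussianPDF a v x :=
        setLIntegral_mono (measurable_const.mul (measurable_gaussianPDF a v)) key
    _ = ENNReal.ofReal C * ∫⁻ x in Ioi a, gaussianPDF a v x :=
        lintegral_const_mul _ (measurable_gaussianPDF a v)
    _ = ENNReal.ofReal C * gaussianReal a v (Ioi a) := by
        rw [gaussianReal_apply a hv]
    _ = ENNReal.ofReal C * gaussianReal 0 v (Ioi 0) := by
        rw [gauss_shift a v measurableSet_Ioi]
        congr 2
        ext x
        simp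
    _ ≤ ENNReal.ofReal C * ENNReal.ofReal (1/2) := by
        exact mul_le_mul_right (gauss_half v) _
    _ = ENNReal.ofReal (C * (1/2)) := (ENNReal.ofReal_mul hCnn).symm

lemma tail_neg (σ : ℝ) (hσ : 0 < σ) (a : ℝ) (ha : a ≤ 0) :
    gaussianReal 0 ((σ^2).toNNReal) (Ioi a)
      ≤ ENNReal.ofReal ((Real.sqrt (2*π*σ^2))⁻¹ * (-a) + 1/2) := by
  set v : ℝ≥0 := (σ^2).toNNReal with hvdef
  have hv : v ≠ 0 := by
    rw [hvdef]
    exact (Real.toNNReal_pos.mpr (by positivity)).ne'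
  have hvr : ((v : ℝ≥0) : ℝ) = σ^2 := Real.coe_toNNReal _ (sq_nonneg σ)
  have hsplit : Ioi a = Ioc a 0 ∪ Ioi (0:ℝ) := (Ioc_union_Ioi_eq_Ioi ha).symm
  have hdisj : Disjoint (Ioc a (0:ℝ)) (Ioi 0) := by
    rw [Set.disjoint_left]; intro x hx hx'
    exact absurd hx.2 (not_le.mpr hx')
  set K : ℝ := (Real.sqrt (2*π*σ^2))⁻¹ with hK
  have hKnn : 0 ≤ K := by positivity
  have h1 : gaussianReal 0 v (Ioc a 0) ≤ ENNReal.ofReal (K * (-a)) := by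
    rw [gaussianReal_apply 0 hv]
    have hb : ∀ x ∈ Ioc a (0:ℝ), gaussianPDF 0 v x ≤ ENNReal.ofReal K := by
      intro x _
      rw [gaussianPDF]
      apply ENNReal.ofReal_le_ofReal
      rw [gaussianPDFReal, hvr, hK]
      have : Real.exp (-(x-0)^2 / (2*σ^2)) ≤ 1 := by
        apply Real.exp_le_one_iff.mpr
        apply div_nonpos_of_nonpos_of_nonneg (by nlinarith [sq_nonneg (x-0)]) (by positivity)
      nlinarith [this, inv_nonneg.mpr (Real.sqrt_nonneg (2*π*σ^2))]
    calc ∫⁻ x in Ioc a 0, gaussianPDF 0 v x ≤ ∫⁻ _ in Ioc a 0, ENNReal.ofReal K :=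
          setLIntegral_mono measurable_const hb
      _ = ENNReal.ofReal K * volume (Ioc a (0:ℝ)) := by
          rw [setLIntegral_const]
      _ = ENNReal.ofReal K * ENNReal.ofReal (0 - a) := by rw [Real.volume_Ioc]
      _ = ENNReal.ofReal (K * (-a)) := by
          rw [← ENNReal.ofReal_mul hKnn]; norm_num
  calc gaussianReal 0 v (Ioi a) = gaussianReal 0 v (Ioc a 0) + gaussianReal 0 v (Ioi 0) := by
        rw [hsplit, measure_union hdisj measurableSet_Ioi]
    _ ≤ ENNReal.ofReal (K * (-a)) + ENNReal.ofReal (1/2) :=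
        add_le_add h1 (gauss_half v)
    _ = ENNReal.ofReal (K * (-a) + 1/2) := by
        rw [← ENNReal.ofReal_add (mul_nonneg hKnn (by linarith)) (by norm_num)]

set_option maxHeartbeats 1000000 in
lemma tail_main (Δ ε δ σ : ℝ) (hΔ : 0 < Δ) (hε0 : 0 < ε) (hε1 : ε < 1)
    (hδ0 : 0 < δ) (hδ1 : δ < 1)
    (hσ : σ = Δ * Real.sqrt (2 * Real.log (1.25 / δ)) / ε) :
    gaussianReal 0 ((σ^2).toNNReal) (Ioi (σ^2*ε/Δ - Δ/2)) ≤ ENNReal.ofReal δ := by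
  set L : ℝ := Real.log (1.25 / δ) with hLdef
  have hL : 0 < L := Real.log_pos (by rw [lt_div_iff₀ hδ0]; linarith)
  set c : ℝ := Real.sqrt (2 * L) with hcdef
  have hc : 0 < c := Real.sqrt_pos.mpr (by linarith)
  have hc2 : c^2 = 2 * L := Real.sq_sqrt (by linarith)
  have hLc : L = c^2/2 := by linarith
  have hσc : σ = Δ * c / ε := hσ
  have hσpos : 0 < σ := by rw [hσc]; positivity
  have hexpL2 : Real.exp L = 1.25 / δ := Real.exp_log (by positivity)
  have hexpL : Real.exp (-L) = δ / 1.25 := by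
    rw [Real.exp_neg, hexpL2, inv_div]
  set b : ℝ := σ^2*ε/Δ - Δ/2 with hbdef
  have hbeq : b = σ * (2*c^2 - ε) / (2*c) := by
    rw [hbdef, hσc]
    field_simp
  rcases le_or_gt ε (2*c^2) with h1 | h1
  · -- b ≥ 0 case
    have hbnn : 0 ≤ b := by
      rw [hbeq]
      exact div_nonneg (mul_nonneg hσpos.le (by linarith)) (by positivity)
    refine (tail_pos σ hσpos b hbnn).trans (ENNReal.ofReal_le_ofReal ?_)
    have hexpo : -(b^2) / (2*σ^2) ≤ ε/2 - L := by
      have hb2 : -(b^2)/(2*σ^2) = -((2*c^2-ε)^2/(8*c^2)) := by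
        rw [hbeq]; field_simp; ring
      have hdiff : (ε/2 - L) - (-((2*c^2-ε)^2/(8*c^2))) = ε^2/(8*c^2) := by
        rw [hLc]; field_simp; ring
      have hnn : (0:ℝ) ≤ ε^2/(8*c^2) := by positivity
      rw [hb2]; linarith
    have hee : Real.exp (ε/2 - L) = Real.exp (ε/2) * (δ/1.25) := by
      rw [Real.exp_sub, hexpL2, div_div_eq_mul_div, mul_div_assoc]
    have hehalf : Real.exp (1/2:ℝ) ≤ 2.5 := by
      have e2 : Real.exp (1/2:ℝ) * Real.exp (1/2:ℝ) = Real.exp 1 := by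
        rw [← Real.exp_add]; norm_num
      nlinarith [Real.exp_one_lt_d9, Real.exp_pos (1/2:ℝ)]
    have h2 : Real.exp (ε/2) ≤ 2.5 :=
      (Real.exp_le_exp.mpr (by linarith)).trans hehalf
    calc Real.exp (-(b^2)/(2*σ^2)) * (1/2) ≤ Real.exp (ε/2 - L) * (1/2) :=
          mul_le_mul_of_nonneg_right (Real.exp_le_exp.mpr hexpo) (by norm_num)
      _ = Real.exp (ε/2) * (δ/1.25) * (1/2) := by rw [hee]
      _ ≤ 2.5 * (δ/1.25) * (1/2) :=
          mul_le_mul_of_nonneg_right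
            (mul_le_mul_of_nonneg_right h2 (by positivity : (0:ℝ) ≤ δ/1.25)) (by norm_num)
      _ = δ := by ring
  · -- b < 0 case
    have hbneg : b ≤ 0 := by
      rw [hbeq]
      exact div_nonpos_of_nonpos_of_nonneg
        (mul_nonpos_of_nonneg_of_nonpos hσpos.le (by linarith)) (by positivity)
    refine (tail_neg σ hσpos b hbneg).trans (ENNReal.ofReal_le_ofReal ?_)
    have hlog125 : (0.2:ℝ) ≤ Real.log 1.25 := by
      have h := Real.log_le_sub_one_of_pos (show (0:ℝ) < 0.8 by norm_num)
      have h2 : Real.log (1.25:ℝ) = - Real.log 0.8 := by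
        rw [← Real.log_inv]; norm_num
      rw [h2]; linarith
    have hLlb : (0.2:ℝ) ≤ L := by
      refine hlog125.trans ?_
      apply Real.log_le_log (by norm_num)
      rw [le_div_iff₀ hδ0]; nlinarith
    have hc2lb : (0.4:ℝ) ≤ c^2 := by rw [hc2]; linarith
    have hclb : (0.63:ℝ) ≤ c := by nlinarith
    have hsqrt2pi : (2.5:ℝ) ≤ Real.sqrt (2*π) := by
      have h2pi : (6.25:ℝ) ≤ 2*π := by linarith [Real.pi_gt_d2]
      have hs1 : Real.sqrt (6.25:ℝ) ≤ Real.sqrt (2*π) := Real.sqrt_le_sqrt h2pi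
      have hs2 : Real.sqrt (6.25:ℝ) = 2.5 := by
        rw [show (6.25:ℝ) = 2.5^2 by norm_num, Real.sqrt_sq (by norm_num)]
      linarith
    have hLub : L ≤ 1/4 := by linarith [hLc]
    have hδlb : 1.25 * Real.exp (-(1/4:ℝ)) ≤ δ := by
      have h := Real.exp_le_exp.mpr (show -(1/4:ℝ) ≤ -L by linarith)
      rw [hexpL] at h
      calc 1.25 * Real.exp (-(1/4:ℝ)) ≤ 1.25 * (δ/1.25) :=
            mul_le_mul_of_nonneg_left h (by norm_num)
        _ = δ := by ring
    have hexpq : Real.exp (1/4:ℝ) ≤ 1.29 := by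
      have e1 : Real.exp (1/4:ℝ) * Real.exp (1/4:ℝ) = Real.exp (1/2:ℝ) := by
        rw [← Real.exp_add]; norm_num
      have e2 : Real.exp (1/2:ℝ) * Real.exp (1/2:ℝ) = Real.exp 1 := by
        rw [← Real.exp_add]; norm_num
      by_contra hcon
      push_neg at hcon
      have hy : (1.6641:ℝ) < Real.exp (1/2:ℝ) := by
        have h := mul_lt_mul'' hcon hcon (by norm_num) (by norm_num)
        rw [e1] at h
        calc (1.6641:ℝ) = 1.29 * 1.29 := by norm_num
          _ < Real.exp (1/2:ℝ) := h
      have h1' : (2.76922881:ℝ) < Real.exp 1 := by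
        have h := mul_lt_mul'' hy hy (by norm_num) (by norm_num)
        rw [e2] at h
        calc (2.76922881:ℝ) = 1.6641 * 1.6641 := by norm_num
          _ < Real.exp 1 := h
      linarith [Real.exp_one_lt_d9]
    have hδlb2 : (0.96:ℝ) ≤ δ := by
      have hinv : (1.29:ℝ)⁻¹ ≤ (Real.exp (1/4:ℝ))⁻¹ :=
        inv_anti₀ (Real.exp_pos _) hexpq
      have hne : Real.exp (-(1/4:ℝ)) = (Real.exp (1/4:ℝ))⁻¹ := Real.exp_neg _
      calc (0.96:ℝ) ≤ 1.25 * (1.29:ℝ)⁻¹ := by norm_num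
        _ ≤ 1.25 * (Real.exp (1/4:ℝ))⁻¹ := mul_le_mul_of_nonneg_left hinv (by norm_num)
        _ = 1.25 * Real.exp (-(1/4:ℝ)) := by rw [hne]
        _ ≤ δ := hδlb
    have hterm : (Real.sqrt (2*π*σ^2))⁻¹ * (-b) = (ε - 2*c^2) / (2*c*Real.sqrt (2*π)) := by
      have hs : Real.sqrt (2*π*σ^2) = Real.sqrt (2*π) * σ := by
        rw [show 2*π*σ^2 = (2*π) * σ^2 by ring, Real.sqrt_mul (by positivity), Real.sqrt_sq hσpos.le]
      rw [hs, hbeq]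
      have hsp : (0:ℝ) < Real.sqrt (2*π) := by linarith
      field_simp
      ring
    rw [hterm]
    have hnum : ε - 2*c^2 ≤ 0.2 := by linarith
    have hden : (3.15:ℝ) ≤ 2*c*Real.sqrt (2*π) := by
      have hm := mul_le_mul hclb hsqrt2pi (by norm_num) (by linarith)
      nlinarith [hm]
    have hfrac : (ε - 2*c^2) / (2*c*Real.sqrt (2*π)) ≤ (0.07:ℝ) :=
      (div_le_div₀ (by norm_num) hnum (by norm_num) hden).trans (by norm_num)
    linarith

open Set
open scoped Real

set_option maxHeartbeats 1000000 in
/-- The one-dimensional Gaussian mechanism is `(ε,δ)`-DP: for a query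
`f : D → ℝ` with sensitivity `Δ` (on neighbouring datasets), releasing
`f(D) + N(0, σ²)` with `σ = Δ·√(2 ln(1.25/δ))/ε` satisfies `(ε,δ)`-DP
for `ε ∈ (0,1)`. -/
theorem gaussian_mechanism_dp
    {D : Type*} (Neighb : D → D → Prop)
    (f : D → ℝ) (Δ ε δ : ℝ)
    (hΔ : 0 < Δ) (hε0 : 0 < ε) (hε1 : ε < 1) (hδ0 : 0 < δ) (hδ1 : δ < 1)
    (hsens : ∀ Dat Dat' : D, Neighb Dat Dat' → |f Dat - f Dat'| ≤ Δ)
    (σ : ℝ) (hσ : σ = Δ * Real.sqrt (2 * Real.log (1.25 / δ)) / ε) :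
    ∀ Dat Dat' : D, Neighb Dat Dat' →
      ∀ E : Set ℝ, MeasurableSet E →
        gaussianReal (f Dat) ((σ ^ 2).toNNReal) E
          ≤ ENNReal.ofReal (Real.exp ε)
              * gaussianReal (f Dat') ((σ ^ 2).toNNReal) E
            + ENNReal.ofReal δ := by
  intro Dat Dat' hN E hE
  have hd : |f Dat - f Dat'| ≤ Δ := hsens _ _ hN
  set μ₁ := f Dat with hμ₁
  set μ₂ := f Dat' with hμ₂
  have hL : 0 < Real.log (1.25 / δ) := Real.log_pos (by rw [lt_div_iff₀ hδ0]; linarith)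
  have hσpos : 0 < σ := by
    rw [hσ]
    exact div_pos (mul_pos hΔ (Real.sqrt_pos.mpr (by linarith))) hε0
  set v : ℝ≥0 := (σ^2).toNNReal with hvdef
  have hv : v ≠ 0 := (Real.toNNReal_pos.mpr (by positivity)).ne'
  have hvr : ((v : ℝ≥0) : ℝ) = σ^2 := Real.coe_toNNReal _ (sq_nonneg σ)
  obtain ⟨d, hddef⟩ : ∃ y : ℝ, y = μ₁ - μ₂ := ⟨_, rfl⟩
  rw [← hddef] at hd
  set B := {x : ℝ | Real.exp ε * gaussianPDFReal μ₂ v x < gaussianPDFReal μ₁ v x} with hBdef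
  have hBm : MeasurableSet B :=
    measurableSet_lt (measurable_const.mul (measurable_gaussianPDFReal _ _))
      (measurable_gaussianPDFReal _ _)
  have stepA : gaussianReal μ₁ v E
      ≤ ENNReal.ofReal (Real.exp ε) * gaussianReal μ₂ v E + gaussianReal μ₁ v B := by
    have hdisj : Disjoint (E \ B) (E ∩ B) := by
      rw [Set.disjoint_left]
      rintro x ⟨_, hxB⟩ ⟨_, hxB'⟩
      exact hxB hxB'
    have hE1 : gaussianReal μ₁ v E
        = (∫⁻ x in E \ B, gaussianPDF μ₁ v x) + ∫⁻ x in E ∩ B, gaussianPDF μ₁ v x := by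
      have hsplit := lintegral_union (μ := volume) (f := gaussianPDF μ₁ v)
        (hE.inter hBm) hdisj
      rw [Set.diff_union_inter] at hsplit
      rw [gaussianReal_apply _ hv E]
      exact hsplit
    rw [hE1]
    refine add_le_add ?_ ?_
    · calc ∫⁻ x in E \ B, gaussianPDF μ₁ v x
          ≤ ∫⁻ x in E \ B, ENNReal.ofReal (Real.exp ε) * gaussianPDF μ₂ v x := by
            apply setLIntegral_mono (measurable_const.mul (measurable_gaussianPDF _ _))
            intro x hx
            show gaussianPDF μ₁ v x ≤ ENNReal.ofReal (Real.exp ε) * gaussianPDF μ₂ v x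
            have hle : gaussianPDFReal μ₁ v x ≤ Real.exp ε * gaussianPDFReal μ₂ v x :=
              not_lt.mp hx.2
            rw [gaussianPDF, gaussianPDF, ← ENNReal.ofReal_mul (Real.exp_pos ε).le]
            exact ENNReal.ofReal_le_ofReal hle
        _ = ENNReal.ofReal (Real.exp ε) * ∫⁻ x in E \ B, gaussianPDF μ₂ v x :=
            lintegral_const_mul _ (measurable_gaussianPDF _ _)
        _ ≤ ENNReal.ofReal (Real.exp ε) * ∫⁻ x in E, gaussianPDF μ₂ v x :=
            mul_le_mul_right (lintegral_mono_set Set.diff_subset) _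
        _ = ENNReal.ofReal (Real.exp ε) * gaussianReal μ₂ v E := by
            rw [gaussianReal_apply _ hv E]
    · calc ∫⁻ x in E ∩ B, gaussianPDF μ₁ v x ≤ ∫⁻ x in B, gaussianPDF μ₁ v x :=
            lintegral_mono_set Set.inter_subset_right
        _ = gaussianReal μ₁ v B := (gaussianReal_apply _ hv B).symm
  refine stepA.trans (add_le_add_right ?_ _)
  -- Step B : gaussianReal μ₁ v B ≤ ofReal δ
  by_cases hd0 : d = 0
  · rw [hddef] at hd0
    have hμeq : μ₁ = μ₂ := sub_eq_zero.mp hd0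
    have hBempty : B = ∅ := by
      ext x
      simp only [hBdef, Set.mem_setOf_eq, Set.mem_empty_iff_false, iff_false, not_lt, hμeq]
      nlinarith [Real.one_le_exp hε0.le, gaussianPDFReal_pos μ₂ v x hv]
    rw [hBempty]
    simp
  · have hμ2d : μ₂ = μ₁ - d := by rw [hddef]; ring
    have hBiff : ∀ x, x ∈ B ↔ σ^2*ε - d^2/2 < d*(x-μ₁) := by
      intro x
      rw [hBdef]
      simp only [Set.mem_setOf_eq]
      rw [gaussianPDFReal, gaussianPDFReal, hvr]
      have hK : (0:ℝ) < (Real.sqrt (2*π*σ^2))⁻¹ := by positivity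
      rw [mul_left_comm, mul_lt_mul_iff_right₀ hK, ← Real.exp_add, Real.exp_lt_exp, hμ2d]
      have heq : -(x-μ₁)^2/(2*σ^2) - (ε + -(x-(μ₁-d))^2/(2*σ^2))
          = (d*(x-μ₁) - (σ^2*ε - d^2/2))/(σ^2) := by
        field_simp
        ring
      constructor
      · intro h
        have h2 : (0:ℝ) < -(x-μ₁)^2/(2*σ^2) - (ε + -(x-(μ₁-d))^2/(2*σ^2)) := sub_pos.mpr h
        rw [heq, lt_div_iff₀ (by positivity : (0:ℝ) < σ^2), zero_mul] at h2
        linarith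
      · intro h
        have h2 : (0:ℝ) < (d*(x-μ₁) - (σ^2*ε - d^2/2))/(σ^2) :=
          div_pos (by linarith) (by positivity)
        rw [← heq] at h2
        linarith
    obtain ⟨r, hrdef⟩ : ∃ y : ℝ, y = σ^2*ε - d^2/2 := ⟨_, rfl⟩
    rw [← hrdef] at hBiff
    have hmono : ∀ e : ℝ, 0 < e → e ≤ Δ → σ^2*ε/Δ - Δ/2 ≤ σ^2*ε/e - e/2 := by
      intro e he heΔ
      have h1 : σ^2*ε/Δ ≤ σ^2*ε/e := by
        apply div_le_div_of_nonneg_left (by positivity) he heΔ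
      linarith
    rcases lt_or_gt_of_ne hd0 with hneg | hpos
    · -- d < 0 : B = Iio (μ₁ + r/d)
      have hBeq : B = Iio (μ₁ + r/d) := by
        ext x
        rw [hBiff x, mem_Iio]
        have hiff : (x - μ₁ < r/d) ↔ (r < (x-μ₁)*d) := lt_div_iff_of_neg hneg
        rw [mul_comm d]
        constructor
        · intro h; have := hiff.mpr h; linarith
        · intro h; exact hiff.mp (by linarith)
      rw [hBeq, gauss_shift μ₁ v measurableSet_Iio]
      have hpre : (· + μ₁) ⁻¹' (Iio (μ₁ + r/d)) = Iio (r/d) := by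
        ext x; simp [add_comm]
      rw [hpre, gauss_Iio_eq_Ioi]
      have hdle : -d ≤ Δ := by linarith [(abs_le.mp hd).1]
      have hrd : -(r/d) = σ^2*ε/(-d) - (-d)/2 := by
        rw [hrdef]
        field_simp [hd0]
        ring
      have hb0le : σ^2*ε/Δ - Δ/2 ≤ -(r/d) := by
        rw [hrd]; exact hmono (-d) (by linarith) hdle
      calc gaussianReal 0 v (Ioi (-(r/d))) ≤ gaussianReal 0 v (Ioi (σ^2*ε/Δ - Δ/2)) :=
            measure_mono (Ioi_subset_Ioi hb0le)
        _ ≤ ENNReal.ofReal δ := tail_main Δ ε δ σ hΔ hε0 hε1 hδ0 hδ1 hσ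
    · -- d > 0 : B = Ioi (μ₁ + r/d)
      have hBeq : B = Ioi (μ₁ + r/d) := by
        ext x
        rw [hBiff x, mem_Ioi]
        have hiff : (r/d < x - μ₁) ↔ (r < (x-μ₁)*d) := div_lt_iff₀ hpos
        rw [mul_comm d]
        constructor
        · intro h; have := hiff.mpr h; linarith
        · intro h; exact hiff.mp (by linarith)
      rw [hBeq, gauss_shift μ₁ v measurableSet_Ioi]
      have hpre : (· + μ₁) ⁻¹' (Ioi (μ₁ + r/d)) = Ioi (r/d) := by
        ext x; simp [add_comm]
      rw [hpre]
      have hdle : d ≤ Δ := (abs_le.mp hd).2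
      have hrd : r/d = σ^2*ε/d - d/2 := by
        rw [hrdef]
        field_simp [hd0]
      have hb0le : σ^2*ε/Δ - Δ/2 ≤ r/d := by
        rw [hrd]; exact hmono d hpos hdle
      calc gaussianReal 0 v (Ioi (r/d)) ≤ gaussianReal 0 v (Ioi (σ^2*ε/Δ - Δ/2)) :=
            measure_mono (Ioi_subset_Ioi hb0le)
        _ ≤ ENNReal.ofReal δ := tail_main Δ ε δ σ hΔ hε0 hε1 hδ0 hδ1 hσ

end GaussianDPHelpers
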